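/- Let f be a piecewise λ-contraction on a compact metric space X with IFS {φ_i}_{i∈A} and fix x_0 ∈ X. For every regular point x ∈ Z(f) and every y ∈ ω(f,x), there exists a sequence of itineraries α^{(j)} of x of increasing orders n_j such that φ^{α^{(j)}}(x_0) → y; consequently ω(f,x) ⊆ Ω(f), where Ω(f) = ⋂_{m≥1} closure(⋃_{n≥m} {φ^α(x_0) : α ∈ I_n(f)}). -/

import Mathlib

/-- Composition `φ^α` of the first `n` maps of the IFS along the word `α`:
`compIFS φ α n = φ (α (n-1)) ∘ ⋯ ∘ φ (α 0)`. -/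
def compIFS {X : Type*} {N : ℕ} (φ : Fin N → X → X) (α : ℕ → Fin N) : ℕ → X → X
  | 0 => id
  | n + 1 => φ (α n) ∘ compIFS φ α n

/-- The ω-limit set of `x` under `f`. -/
def omegaSet {X : Type*} [TopologicalSpace X] (f : X → X) (x : X) : Set X :=
  ⋂ m : ℕ, closure (⋃ n ∈ Set.Ici m, ({f^[n] x} : Set X))

/-- `Ω(f) = ⋂_{m} closure (⋃_{n ≥ m} {φ^α(x₀) : α ∈ I_n(f)})`, where `I_n(f)` is
the set of itineraries of order `n` of `f`. -/
def OmegaIFS {X : Type*} [TopologicalSpace X] {N : ℕ}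
    (f : X → X) (A : Fin N → Set X) (φ : Fin N → X → X) (x₀ : X) : Set X :=
  ⋂ m : ℕ, closure (⋃ n ∈ Set.Ici m,
    ⋃ α ∈ {α : ℕ → Fin N | ∃ x, ∀ j < n, f^[j] x ∈ A (α j)},
      ({compIFS φ α n x₀} : Set X))

lemma compIFS_lip {X : Type*} [MetricSpace X] {N : ℕ} (φ : Fin N → X → X)
    (lam : NNReal) (hlip : ∀ i, LipschitzWith lam (φ i)) (α : ℕ → Fin N) (n : ℕ) :
    LipschitzWith (lam ^ n) (compIFS φ α n) := by
  induction n with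
  | zero => simpa [compIFS] using LipschitzWith.id
  | succ n ih =>
    have := (hlip (α n)).comp ih
    rw [pow_succ, mul_comm]
    exact this

lemma compIFS_itin {X : Type*} [MetricSpace X] {N : ℕ} (f : X → X) (A : Fin N → Set X)
    (φ : Fin N → X → X) (heq : ∀ i, Set.EqOn f (φ i) (A i))
    (x : X) (β : ℕ → Fin N) (hβ : ∀ n, f^[n] x ∈ A (β n)) (n : ℕ) :
    compIFS φ β n x = f^[n] x := by
  induction n with
  | zero => rfl
  | succ n ih =>
    show φ (β n) (compIFS φ β n x) = f^[n+1] x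
    rw [ih, Function.iterate_succ_apply', ← heq (β n) (hβ n)]

/-- any point of `ω(f,x)` for a regular point `x` is a limit of points
`φ^{α⁽ʲ⁾}(x₀)` along itineraries of `x` of increasing orders; consequently
`ω(f,x) ⊆ Ω(f)`. -/
theorem omega_subset_OmegaIFS
    {X : Type*} [MetricSpace X] [CompactSpace X]
    (f : X → X) (N : ℕ) (A : Fin N → Set X) (φ : Fin N → X → X)
    (lam : NNReal) (hlam0 : 0 < lam) (hlam : lam < 1)
    (hopen : ∀ i, IsOpen (A i))
    (hconn : ∀ i, IsConnected (A i))
    (hdisj : ∀ i j, i ≠ j → Disjoint (A i) (A j))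
    (hdense : Dense (⋃ i, A i))
    (hlip : ∀ i, LipschitzWith lam (φ i))
    (hbilip : ∀ i, ∃ K : NNReal, AntilipschitzWith K (φ i))
    (heq : ∀ i, Set.EqOn f (φ i) (A i))
    (x₀ : X) (x : X) (hx : ∀ n : ℕ, f^[n] x ∈ ⋃ i, A i) :
    (∀ y ∈ omegaSet f x, ∃ (nj : ℕ → ℕ) (α : ℕ → ℕ → Fin N),
        StrictMono nj ∧
        (∀ j, ∀ k < nj j, f^[k] x ∈ A (α j k)) ∧
        Filter.Tendsto (fun j => compIFS φ (α j) (nj j) x₀) Filter.atTop (nhds y)) ∧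
    omegaSet f x ⊆ OmegaIFS f A φ x₀ := by
  have main : ∀ y ∈ omegaSet f x, ∃ (nj : ℕ → ℕ) (α : ℕ → ℕ → Fin N),
      StrictMono nj ∧
      (∀ j, ∀ k < nj j, f^[k] x ∈ A (α j k)) ∧
      Filter.Tendsto (fun j => compIFS φ (α j) (nj j) x₀) Filter.atTop (nhds y) := by
    obtain ⟨β, hβ⟩ : ∃ β : ℕ → Fin N, ∀ n, f^[n] x ∈ A (β n) :=
      ⟨fun n => (Set.mem_iUnion.1 (hx n)).choose,
       fun n => (Set.mem_iUnion.1 (hx n)).choose_spec⟩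
    intro y hy
    have key : ∀ m : ℕ, ∀ ε : ℝ, 0 < ε → ∃ n, m ≤ n ∧ dist (f^[n] x) y < ε := by
      intro m ε hε
      have hym : y ∈ closure (⋃ n ∈ Set.Ici m, ({f^[n] x} : Set X)) := by
        have := Set.mem_iInter.1 hy m; exact this
      obtain ⟨b, hb, hdb⟩ := Metric.mem_closure_iff.1 hym ε hε
      simp only [Set.mem_iUnion, Set.mem_singleton_iff, Set.mem_Ici] at hb
      obtain ⟨n, hn, rfl⟩ := hb
      exact ⟨n, hn, by rwa [dist_comm]⟩
    choose g hg1 hg2 using key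
    set nj : ℕ → ℕ := fun j => Nat.rec (g 0 1 one_pos) (fun j' prev =>
      g (prev + 1) (1 / (j' + 2)) (by positivity)) j with hnj
    have hnjsucc : ∀ j, nj j < nj (j + 1) := by
      intro j
      have : nj j + 1 ≤ nj (j + 1) := hg1 (nj j + 1) (1 / (j + 2)) (by positivity)
      omega
    have hmono : StrictMono nj := strictMono_nat_of_lt_succ hnjsucc
    have hdist : ∀ j, dist (f^[nj j] x) y < 1 / (j + 1) := by
      intro j
      cases j with
      | zero =>
        have e0 : nj 0 = g 0 1 one_pos := rfl
        rw [e0]; simpa using hg2 0 1 one_pos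
      | succ j' =>
        have e : nj (j' + 1) = g (nj j' + 1) (1 / (j' + 2)) (by positivity) := rfl
        have := hg2 (nj j' + 1) (1 / (j' + 2)) (by positivity)
        rw [e]
        have h2 : ((j' : ℝ) + 1 + 1) = (j' + 2 : ℝ) := by ring
        simpa [Nat.cast_add, Nat.cast_one, h2] using this
    refine ⟨nj, fun _ => β, hmono, fun j k _ => hβ k, ?_⟩
    rw [tendsto_iff_dist_tendsto_zero]
    have hbound : ∀ j : ℕ, dist (compIFS φ β (nj j) x₀) y
        ≤ (lam : ℝ) ^ j * dist x₀ x + 1 / (j + 1) := by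
      intro j
      have h1 : dist (compIFS φ β (nj j) x₀) (compIFS φ β (nj j) x)
          ≤ (lam : ℝ) ^ (nj j) * dist x₀ x := by
        have := (compIFS_lip φ lam hlip β (nj j)).dist_le_mul x₀ x
        simpa using this
      have h2 : (lam : ℝ) ^ (nj j) ≤ (lam : ℝ) ^ j :=
        pow_le_pow_of_le_one lam.coe_nonneg (le_of_lt (by exact_mod_cast hlam)) (hmono.id_le j)
      calc dist (compIFS φ β (nj j) x₀) y
          ≤ dist (compIFS φ β (nj j) x₀) (compIFS φ β (nj j) x)
            + dist (compIFS φ β (nj j) x) y := dist_triangle _ _ _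
        _ ≤ (lam : ℝ) ^ (nj j) * dist x₀ x + dist (compIFS φ β (nj j) x) y :=
            add_le_add h1 le_rfl
        _ ≤ (lam : ℝ) ^ j * dist x₀ x + 1 / (j + 1) := by
            refine add_le_add (mul_le_mul_of_nonneg_right h2 dist_nonneg) ?_
            rw [compIFS_itin f A φ heq x β hβ]; exact (hdist j).le
    have htend : Filter.Tendsto (fun j : ℕ => (lam : ℝ) ^ j * dist x₀ x + 1 / (j + 1))
        Filter.atTop (nhds 0) := by
      have t1 : Filter.Tendsto (fun j : ℕ => (lam : ℝ) ^ j * dist x₀ x) Filter.atTop (nhds 0) := by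
        simpa using (tendsto_pow_atTop_nhds_zero_of_lt_one lam.coe_nonneg
          (by exact_mod_cast hlam)).mul_const (dist x₀ x)
      have t2 : Filter.Tendsto (fun j : ℕ => 1 / ((j : ℝ) + 1)) Filter.atTop (nhds 0) :=
        tendsto_one_div_add_atTop_nhds_zero_nat
      simpa using t1.add t2
    exact squeeze_zero (fun j => dist_nonneg) hbound htend
  refine ⟨main, fun y hy => ?_⟩
  obtain ⟨nj, α, hmono, hitin, htend⟩ := main y hy
  refine Set.mem_iInter.2 fun m => ?_
  refine mem_closure_of_tendsto htend ?_
  filter_upwards [Filter.eventually_ge_atTop m] with j hj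
  simp only [Set.mem_iUnion, Set.mem_singleton_iff, Set.mem_Ici, Set.mem_setOf_eq]
  exact ⟨nj j, hj.trans (hmono.id_le j), α j, ⟨x, fun k hk => hitin j k hk⟩, rfl⟩
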